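/- For every one-dimensional sand automaton, F-surjectivity implies P-surjectivity: if every finite configuration has a finite preimage under the global function f, then every periodic configuration has a periodic preimage under f. -/

import Mathlib

/-- The extended integers `ℤ ∪ {-∞, +∞}`. -/
abbrev EZ : Type := WithBot (WithTop ℤ)

/-- Embedding of `ℤ` into the extended integers. -/
def finVal (n : ℤ) : EZ := ((n : WithTop ℤ) : EZ)

/-- The integer value of a finite extended integer (`0` on `±∞`). -/
def valZ (x : EZ) : ℤ := WithBot.recBotCoe 0 (fun y => WithTop.recTopCoe 0 id y) x

/-- The measuring device `β_l^m`. -/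
noncomputable def beta (l : ℕ) (m : ℤ) (n : EZ) : EZ :=
  if finVal (m + (l : ℤ)) < n then ⊤
  else if n < finVal (m - (l : ℤ)) then ⊥
  else WithBot.map (WithTop.map (fun k => k - m)) n

/-- Reference height: the value of `x` if finite, `0` if `x = ±∞`. -/
def refH (x : EZ) : ℤ := if x = ⊥ ∨ x = ⊤ then 0 else valZ x

/-- One-dimensional sandpile configurations. -/
abbrev Config : Type := ℤ → EZ

/-- The neighborhood sequence `d_r^i(c)`: the `2r`-tuple of measured differences. -/
noncomputable def nbhd (r : ℕ) (c : Config) (i : ℤ) : Fin (2 * r) → EZ :=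
  fun j => beta r (refH (c i))
    (c (i + (if (j : ℕ) < r then ((j : ℕ) : ℤ) - (r : ℤ) else ((j : ℕ) : ℤ) - (r : ℤ) + 1)))

/-- The global function of the sand automaton of radius `r` with local rule `lam`. -/
noncomputable def globalF (r : ℕ) (lam : (Fin (2 * r) → EZ) → ℤ) (c : Config) : Config :=
  fun i => if c i = ⊥ ∨ c i = ⊤ then c i
    else finVal (valZ (c i) + lam (nbhd r c i))

/-- Finite configurations. -/
def FiniteConf (c : Config) : Prop := ∃ k : ℕ, ∀ i : ℤ, (k : ℤ) ≤ |i| → c i = finVal 0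

/-- Periodic configurations. -/
def PeriodicConf (c : Config) : Prop := ∃ p : ℤ, p ≠ 0 ∧ ∀ i : ℤ, c (i + p) = c i


lemma finVal_ne_bot (z : ℤ) : finVal z ≠ ⊥ := by simp [finVal]
lemma finVal_ne_top (z : ℤ) : finVal z ≠ ⊤ := by simp [finVal]
lemma valZ_finVal (z : ℤ) : valZ (finVal z) = z := rfl
lemma eq_finVal_valZ (x : EZ) (h1 : x ≠ ⊥) (h2 : x ≠ ⊤) : x = finVal (valZ x) := by
  induction x using WithBot.recBotCoe with
  | bot => simp at h1
  | coe y =>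
    induction y using WithTop.recTopCoe with
    | top => simp at h2
    | coe z => rfl

lemma periodExt {X : Type*} (g : ℤ → X) (q : ℤ) (hg : ∀ i, g (i + q) = g i) :
    ∀ (i m : ℤ), g (i + m * q) = g i := by
  intro i m
  induction m using Int.induction_on with
  | zero => simp
  | succ n ih => rw [show i + (n+1)*q = (i + n*q) + q by ring, hg, ih]
  | pred n ih =>
      have := hg (i + (-n-1)*q)
      rw [show i + (-n-1)*q + q = i + (-n)*q by ring] at this
      rw [show i + (-(n:ℤ)-1)*q = i + (-n-1)*q by ring, ← this, ih]

lemma nbhd_local (r : ℕ) (c c' : Config) (i : ℤ)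
    (h : ∀ j : ℤ, i - r ≤ j → j ≤ i + r → c j = c' j) :
    nbhd r c i = nbhd r c' i := by
  have hci : c i = c' i := h i (by omega) (by omega)
  funext j
  have hj := j.2
  unfold nbhd
  rw [hci]
  congr 1
  apply h <;> split <;> omega

lemma globalF_local (r : ℕ) (lam : (Fin (2 * r) → EZ) → ℤ) (c c' : Config) (i : ℤ)
    (h : ∀ j : ℤ, i - r ≤ j → j ≤ i + r → c j = c' j) :
    globalF r lam c i = globalF r lam c' i := by
  have hci : c i = c' i := h i (by omega) (by omega)
  unfold globalF
  rw [hci, nbhd_local r c c' i h]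

lemma globalF_shift (r : ℕ) (lam : (Fin (2 * r) → EZ) → ℤ) (c : Config) (q : ℤ)
    (hper : ∀ i, c (i + q) = c i) (i : ℤ) :
    globalF r lam c (i + q) = globalF r lam c i := by
  have hn : nbhd r c (i + q) = nbhd r c i := by
    funext j
    unfold nbhd
    rw [hper i]
    congr 1
    rw [show i + q + (if (j : ℕ) < r then ((j:ℕ):ℤ) - r else ((j:ℕ):ℤ) - r + 1)
        = (i + (if (j : ℕ) < r then ((j:ℕ):ℤ) - r else ((j:ℕ):ℤ) - r + 1)) + q by ring, hper]
  unfold globalF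
  rw [hper, hn]


/-- For every one-dimensional sand automaton (radius `r ≥ 1`, local rule `lam` taking
values in `[-r, r]`), `F`-surjectivity implies `P`-surjectivity: if every finite
configuration has a finite preimage, then every periodic configuration has a
periodic preimage. -/
theorem F_surjective_implies_P_surjective
    (r : ℕ) (hr : 1 ≤ r) (lam : (Fin (2 * r) → EZ) → ℤ)
    (hlam : ∀ v, -(r : ℤ) ≤ lam v ∧ lam v ≤ (r : ℤ))
    (hFsurj : ∀ c : Config, FiniteConf c → ∃ c', FiniteConf c' ∧ globalF r lam c' = c) :
    ∀ c : Config, PeriodicConf c → ∃ c', PeriodicConf c' ∧ globalF r lam c' = c := by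
  intro c hcP
  obtain ⟨p, hp0, hp⟩ := hcP
  -- positive period p0
  set p0 : ℤ := |p| with hp0def
  have hp0pos : 0 < p0 := abs_pos.mpr hp0
  have hcper : ∀ i, c (i + p0) = c i := by
    intro i
    rcases abs_choice p with h | h
    · rw [hp0def, h]; exact hp i
    · rw [hp0def, h]
      have h2 := hp (i + -p)
      rw [show i + -p + p = i by ring] at h2
      exact h2.symm
  -- the big period P = p0 * r
  set P : ℤ := p0 * r with hPdef
  have hrpos : (0:ℤ) < r := by exact_mod_cast hr
  have hPpos : 0 < P := by positivity
  have hPr : (r:ℤ) ≤ P := by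
    calc (r:ℤ) = 1 * r := (one_mul _).symm
    _ ≤ p0 * r := by apply mul_le_mul_of_nonneg_right <;> omega
  have hcPper : ∀ i, c (i + P) = c i := by
    intro i
    have := periodExt c p0 hcper i r
    rwa [show (r:ℤ) * p0 = P by rw [hPdef]; ring] at this
  -- sizes
  set N : ℕ := (2*r+1)^(2*r) with hNdef
  set n : ℤ := N * P + 2 * r with hndef
  have hn0 : 0 ≤ n := by
    have : 0 ≤ (N:ℤ) * P := by positivity
    omega
  -- the finite approximation b
  set b : Config := fun i => if |i| ≤ n then c i else finVal 0 with hbdef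
  have hbfin : FiniteConf b := by
    refine ⟨(n+1).toNat, fun i hi => ?_⟩
    have : ¬ |i| ≤ n := by omega
    simp only [hbdef, if_neg this]
  obtain ⟨e, hefin, hfe⟩ := hFsurj b hbfin
  -- pointwise preimage facts
  have hpre : ∀ i : ℤ, |i| ≤ n →
      (c i = ⊥ → e i = ⊥) ∧ (c i = ⊤ → e i = ⊤) ∧
      (c i ≠ ⊥ → c i ≠ ⊤ →
        e i ≠ ⊥ ∧ e i ≠ ⊤ ∧ valZ (c i) = valZ (e i) + lam (nbhd r e i)) := by
    intro i hi
    have hbe : globalF r lam e i = c i := by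
      rw [hfe]; simp only [hbdef, if_pos hi]
    unfold globalF at hbe
    by_cases hinf : e i = ⊥ ∨ e i = ⊤
    · rw [if_pos hinf] at hbe
      refine ⟨fun h => by rw [hbe, h], fun h => by rw [hbe, h], fun h1 h2 => ?_⟩
      rcases hinf with h | h
      · exact absurd (hbe ▸ h) h1
      · exact absurd (hbe ▸ h) h2
    · rw [if_neg hinf] at hbe
      push_neg at hinf
      refine ⟨fun h => ?_, fun h => ?_, fun _ _ => ⟨hinf.1, hinf.2, ?_⟩⟩
      · rw [h] at hbe; exact absurd hbe (finVal_ne_bot _)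
      · rw [h] at hbe; exact absurd hbe (finVal_ne_top _)
      · rw [← hbe, valZ_finVal]
  -- value bound
  have habs : ∀ i : ℤ, |i| ≤ n → c i ≠ ⊥ → c i ≠ ⊤ →
      -(r:ℤ) ≤ valZ (e i) - valZ (c i) ∧ valZ (e i) - valZ (c i) ≤ r := by
    intro i hi h1 h2
    obtain ⟨_, _, hv⟩ := (hpre i hi).2.2 h1 h2
    obtain ⟨hl, hu⟩ := hlam (nbhd r e i)
    constructor <;> linarith
  -- blocks
  set H : ℕ → (Fin (2*r) → ℤ) :=
    fun k t => valZ (e ((k:ℤ) * P + ((t:ℕ):ℤ))) - valZ (c ((t:ℕ):ℤ)) with hHdef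
  have hposbound : ∀ (k : ℕ), k ≤ N → ∀ (t : ℤ), 0 ≤ t → t < 2*r →
      |(k:ℤ) * P + t| ≤ n := by
    intro k hk t ht1 ht2
    have h1 : (k:ℤ) * P ≤ (N:ℤ) * P :=
      mul_le_mul_of_nonneg_right (by exact_mod_cast hk) (le_of_lt hPpos)
    have h2 : 0 ≤ (k:ℤ) * P := by positivity
    rw [abs_le]
    constructor <;> [omega; omega]
  have hcshift : ∀ (k : ℕ) (t : ℤ), c ((k:ℤ) * P + t) = c t := by
    intro k t
    have := periodExt c P hcPper t k
    rwa [show t + (k:ℤ) * P = (k:ℤ) * P + t by ring] at this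
  -- pigeonhole
  have hcard : (Fintype.piFinset (fun _ : Fin (2*r) => Finset.Icc (-(r:ℤ)) (r:ℤ))).card
      < (Finset.range (N+1)).card := by
    rw [Finset.card_range, Fintype.card_piFinset]
    have h1 : (Finset.Icc (-(r:ℤ)) (r:ℤ)).card = 2*r+1 := by
      rw [Int.card_Icc]
      omega
    simp only [h1, Finset.prod_const, Finset.card_univ, Fintype.card_fin]
    omega

  have hvbot : valZ (⊥ : EZ) = 0 := rfl
  have hvtop : valZ (⊤ : EZ) = 0 := rfl
  have hmaps : ∀ k ∈ Finset.range (N+1),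
      H k ∈ Fintype.piFinset (fun _ : Fin (2*r) => Finset.Icc (-(r:ℤ)) (r:ℤ)) := by
    intro k hk
    rw [Fintype.mem_piFinset]
    intro t
    simp only [Finset.mem_range] at hk
    have hkN : k ≤ N := by omega
    have htb : ((t:ℕ):ℤ) < 2*r := by exact_mod_cast t.2
    have htnn : (0:ℤ) ≤ ((t:ℕ):ℤ) := Int.ofNat_nonneg _
    have hib : |(k:ℤ) * P + ((t:ℕ):ℤ)| ≤ n := hposbound k hkN _ htnn htb
    have hceq : c ((k:ℤ) * P + ((t:ℕ):ℤ)) = c ((t:ℕ):ℤ) := hcshift k _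
    rw [Finset.mem_Icc]
    simp only [hHdef]
    by_cases hcb : c ((t:ℕ):ℤ) = ⊥
    · have heb : e ((k:ℤ) * P + ((t:ℕ):ℤ)) = ⊥ := (hpre _ hib).1 (hceq.trans hcb)
      rw [heb, hcb, hvbot]
      omega
    · by_cases hct : c ((t:ℕ):ℤ) = ⊤
      · have heb : e ((k:ℤ) * P + ((t:ℕ):ℤ)) = ⊤ := (hpre _ hib).2.1 (hceq.trans hct)
        rw [heb, hct, hvtop]
        omega
      · have := habs _ hib (by rw [hceq]; exact hcb) (by rw [hceq]; exact hct)
        rw [hceq] at this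
        exact ⟨this.1, this.2⟩
  obtain ⟨k1, hk1, k2, hk2, hne, hHeq⟩ :=
    Finset.exists_ne_map_eq_of_card_lt_of_maps_to hcard hmaps
  simp only [Finset.mem_range] at hk1 hk2
  clear hmaps hcard hbfin hefin
  -- main construction, symmetric in k1 k2, so we prove it for a < b
  have key : ∀ ka kb : ℕ, ka < kb → kb ≤ N → H ka = H kb →
      ∃ c', PeriodicConf c' ∧ globalF r lam c' = c := by
    intro k1 k2 hlt hk2N hHeq
    have hk1N : k1 ≤ N := by omega
    -- block equality
    have hblock : ∀ t : ℤ, 0 ≤ t → t < 2*r →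
        e ((k1:ℤ)*P + t) = e ((k2:ℤ)*P + t) := by
      intro t ht1 ht2
      have htf : t.toNat < 2*r := by omega
      have hv := congrFun hHeq ⟨t.toNat, htf⟩
      simp only [hHdef] at hv
      have htc : ((t.toNat : ℕ) : ℤ) = t := by omega
      rw [htc] at hv
      have hib1 : |(k1:ℤ) * P + t| ≤ n := hposbound k1 hk1N t ht1 ht2
      have hib2 : |(k2:ℤ) * P + t| ≤ n := hposbound k2 hk2N t ht1 ht2
      have hceq1 : c ((k1:ℤ) * P + t) = c t := hcshift k1 t
      have hceq2 : c ((k2:ℤ) * P + t) = c t := hcshift k2 t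
      by_cases hcb : c t = ⊥
      · rw [(hpre _ hib1).1 (hceq1.trans hcb), (hpre _ hib2).1 (hceq2.trans hcb)]
      · by_cases hct : c t = ⊤
        · rw [(hpre _ hib1).2.1 (hceq1.trans hct), (hpre _ hib2).2.1 (hceq2.trans hct)]
        · obtain ⟨hb1, ht1', _⟩ := (hpre _ hib1).2.2 (by rw [hceq1]; exact hcb) (by rw [hceq1]; exact hct)
          obtain ⟨hb2, ht2', _⟩ := (hpre _ hib2).2.2 (by rw [hceq2]; exact hcb) (by rw [hceq2]; exact hct)
          have hvv : valZ (e ((k1:ℤ)*P + t)) = valZ (e ((k2:ℤ)*P + t)) := by omega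
          rw [eq_finVal_valZ _ hb1 ht1', eq_finVal_valZ _ hb2 ht2', hvv]
    -- splice
    set q : ℤ := ((k2:ℤ) - (k1:ℤ)) * P with hqdef
    have hk21 : (1:ℤ) ≤ (k2:ℤ) - (k1:ℤ) := by
      have : (k1:ℤ) < (k2:ℤ) := by exact_mod_cast hlt
      omega
    have hqP : P ≤ q := by
      calc P = 1 * P := (one_mul _).symm
      _ ≤ ((k2:ℤ) - (k1:ℤ)) * P := mul_le_mul_of_nonneg_right hk21 (le_of_lt hPpos)
    have hqpos : 0 < q := lt_of_lt_of_le hPpos hqP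
    have hqr : (r:ℤ) ≤ q := le_trans hPr hqP
    have hk2P : (k2:ℤ) * P = (k1:ℤ) * P + q := by rw [hqdef]; ring
    set a : ℤ := (k1:ℤ)*P + r with hadef
    set e' : Config := fun i => e (a + (i - a) % q) with he'def
    have he'per : ∀ i, e' (i + q) = e' i := by
      intro i
      simp only [he'def]
      congr 2
      rw [show i + q - a = (i - a) + q * 1 by ring, Int.add_mul_emod_self_left]
    -- agreement on the overlap region
    have hagree : ∀ j : ℤ, (k1:ℤ)*P ≤ j → j < (k2:ℤ)*P + 2*r → e' j = e j := by
      intro j hj1 hj2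
      simp only [he'def]
      by_cases h0 : j - a < 0
      · have h1 : 0 ≤ j - a + q := by omega
        have h2 : j - a + q < q := by omega
        have hm : (j - a) % q = j - a + q := by
          have hx : (j - a) % q = (j - a + q) % q := by
            conv_lhs => rw [show j - a = (j - a + q) + q * (-1) by ring]
            rw [Int.add_mul_emod_self_left]
          rw [hx, Int.emod_eq_of_lt h1 h2]
        rw [hm, show a + (j - a + q) = (k2:ℤ)*P + (j - (k1:ℤ)*P) by rw [hk2P]; ring,
          ← hblock (j - (k1:ℤ)*P) (by omega) (by omega),
          show (k1:ℤ)*P + (j - (k1:ℤ)*P) = j by ring]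
      · by_cases h1 : j - a < q
        · rw [Int.emod_eq_of_lt (by omega) h1, show a + (j - a) = j by ring]
        · have hub : j - a < q + r := by
            have : j < (k1:ℤ)*P + q + 2*r := by rw [← hk2P]; exact hj2
            omega
          have hm : (j - a) % q = j - a - q := by
            have hx : (j - a) % q = (j - a - q) % q := by
              conv_lhs => rw [show j - a = (j - a - q) + q * 1 by ring]
              rw [Int.add_mul_emod_self_left]
            rw [hx, Int.emod_eq_of_lt (by omega) (by omega)]
          rw [hm, show a + (j - a - q) = (k1:ℤ)*P + (j - q - (k1:ℤ)*P) by ring,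
            hblock (j - q - (k1:ℤ)*P) (by omega) (by omega),
            show (k2:ℤ)*P + (j - q - (k1:ℤ)*P) = j by rw [hk2P]; ring]
    -- image correct on fundamental domain
    have hk2Pn : (k2:ℤ) * P ≤ (N:ℤ) * P :=
      mul_le_mul_of_nonneg_right (by exact_mod_cast hk2N) (le_of_lt hPpos)
    have hk1P0 : 0 ≤ (k1:ℤ) * P := by positivity
    have hmid : ∀ i : ℤ, a ≤ i → i < a + q → globalF r lam e' i = c i := by
      intro i h1 h2
      have hloc := globalF_local r lam e' e i (fun j hj1 hj2 =>
        hagree j (by omega) (by omega))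
      rw [hloc, hfe]
      simp only [hbdef]
      rw [if_pos (by rw [abs_le]; omega)]
    -- image correct everywhere
    have hcq : ∀ j, c (j + q) = c j := by
      intro j
      have := periodExt c p0 hcper j (((k2:ℤ) - (k1:ℤ)) * r)
      rwa [show ((k2:ℤ) - (k1:ℤ)) * r * p0 = q by rw [hqdef, hPdef]; ring] at this
    refine ⟨e', ⟨q, ne_of_gt hqpos, he'per⟩, funext fun i => ?_⟩
    set m : ℤ := (i - a) / q with hmdef
    have hdm := Int.mul_ediv_add_emod (i - a) q
    rw [← hmdef] at hdm
    have hcomm : q * m = m * q := mul_comm _ _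
    have hi0 : i = (a + (i - a) % q) + m * q := by omega
    have he'q := periodExt (globalF r lam e') q
      (globalF_shift r lam e' q he'per) (a + (i - a) % q) m
    have hcqm := periodExt c q hcq (a + (i - a) % q) m
    have hem := Int.emod_nonneg (i - a) (ne_of_gt hqpos)
    have hem2 := Int.emod_lt_of_pos (i - a) hqpos
    calc globalF r lam e' i = globalF r lam e' (a + (i - a) % q) := by
          conv_lhs => rw [hi0]
          exact he'q
    _ = c (a + (i - a) % q) := hmid _ (by omega) (by omega)
    _ = c i := by
          conv_rhs => rw [hi0]
          exact hcqm.symm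
  rcases Ne.lt_or_gt hne with hlt | hlt
  · exact key k1 k2 hlt (by omega) hHeq
  · exact key k2 k1 hlt (by omega) hHeq.symm
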